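/- Combining the residual decomposition with the Gram perturbation bounds: if ‖Δ‖₂ ≤ ε, ‖G‖₂ ≤ √N·C, ‖g_tar‖₂ ≤ C, and ŵ lies in the ℓ¹-ball of radius k (so ‖ŵ‖₂ ≤ ‖ŵ‖₁ ≤ k), then the minimizers w*, ŵ of the corresponding quadratic programs over the ℓ¹-ball satisfy ‖ŵ − w*‖₂ ≤ (ε/μ)(2k√N·C + kε + C). -/

import Mathlib

open Matrix BigOperators

noncomputable def enorm2 {n : ℕ} (v : Fin n → ℝ) : ℝ := Real.sqrt (∑ i, v i ^ 2)

noncomputable def specNorm {m n : ℕ} (A : Matrix (Fin m) (Fin n) ℝ) : ℝ :=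
  ‖LinearMap.toContinuousLinearMap (Matrix.toEuclideanLin A)‖

noncomputable def l1norm {n : ℕ} (v : Fin n → ℝ) : ℝ := ∑ i, |v i|

lemma enorm_eq_norm {n : ℕ} (v : Fin n → ℝ) :
    enorm2 v = ‖(WithLp.equiv 2 (Fin n → ℝ)).symm v‖ := by
  simp [enorm2, EuclideanSpace.norm_eq, sq_abs]

lemma enorm_nonneg {n : ℕ} (v : Fin n → ℝ) : 0 ≤ enorm2 v := Real.sqrt_nonneg _

lemma specNorm_nonneg {m n : ℕ} (A : Matrix (Fin m) (Fin n) ℝ) : 0 ≤ specNorm A :=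
  norm_nonneg _

lemma mulVec_enorm_le {m n : ℕ} (A : Matrix (Fin m) (Fin n) ℝ) (v : Fin n → ℝ) :
    enorm2 (A.mulVec v) ≤ specNorm A * enorm2 v := by
  rw [enorm_eq_norm, enorm_eq_norm]
  have := (LinearMap.toContinuousLinearMap (Matrix.toEuclideanLin A)).le_opNorm
    ((WithLp.equiv 2 (Fin n → ℝ)).symm v)
  simpa [Matrix.toEuclideanLin_apply, specNorm] using this

lemma dot_abs_le {n : ℕ} (u v : Fin n → ℝ) : |u ⬝ᵥ v| ≤ enorm2 u * enorm2 v := by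
  rw [enorm_eq_norm, enorm_eq_norm]
  have := abs_real_inner_le_norm ((WithLp.equiv 2 (Fin n → ℝ)).symm u)
    ((WithLp.equiv 2 (Fin n → ℝ)).symm v)
  simpa [PiLp.inner_apply, dotProduct, mul_comm] using this

lemma enorm_sq {n : ℕ} (v : Fin n → ℝ) : enorm2 v ^ 2 = v ⬝ᵥ v := by
  rw [enorm2, Real.sq_sqrt (Finset.sum_nonneg fun i _ => sq_nonneg _)]
  simp [dotProduct, sq]

lemma dot_mulVec_eq {m n : ℕ} (A : Matrix (Fin m) (Fin n) ℝ) (u : Fin m → ℝ) (v : Fin n → ℝ) :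
    u ⬝ᵥ A.mulVec v = (Aᵀ.mulVec u) ⬝ᵥ v := by
  rw [dotProduct_mulVec, mulVec_transpose]

lemma specNorm_transpose_le {m n : ℕ} (A : Matrix (Fin m) (Fin n) ℝ) :
    specNorm Aᵀ ≤ specNorm A := by
  have key : ∀ x : Fin m → ℝ, enorm2 (Aᵀ.mulVec x) ≤ specNorm A * enorm2 x := by
    intro x
    set y := Aᵀ.mulVec x with hy
    rcases le_or_gt (enorm2 y) 0 with h | h
    · exact h.trans (mul_nonneg (specNorm_nonneg A) (enorm_nonneg x))
    · have h1 : enorm2 y ^ 2 = x ⬝ᵥ A.mulVec y := by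
        rw [enorm_sq, hy, ← dot_mulVec_eq, dotProduct_comm]
      have h2 : x ⬝ᵥ A.mulVec y ≤ enorm2 x * (specNorm A * enorm2 y) :=
        le_trans (le_trans (le_abs_self _) (dot_abs_le _ _))
          (by have := mulVec_enorm_le A y
              nlinarith [enorm_nonneg x])
      nlinarith
  rw [specNorm]
  apply ContinuousLinearMap.opNorm_le_bound _ (specNorm_nonneg A)
  intro x
  have := key ((WithLp.equiv 2 (Fin m → ℝ)) x)
  rw [enorm_eq_norm, enorm_eq_norm] at this
  simpa [Matrix.toEuclideanLin_apply] using this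

lemma specNorm_add_le {m n : ℕ} (A B : Matrix (Fin m) (Fin n) ℝ) :
    specNorm (A + B) ≤ specNorm A + specNorm B := by
  rw [specNorm, map_add, map_add]
  exact norm_add_le _ _

lemma enorm_le_l1norm {n : ℕ} (v : Fin n → ℝ) : enorm2 v ≤ l1norm v := by
  have h : ∑ i, v i ^ 2 ≤ (∑ i, |v i|) ^ 2 := by
    calc ∑ i, v i ^ 2 = ∑ i, |v i| ^ 2 := by simp [sq_abs]
    _ ≤ (∑ i, |v i|) ^ 2 :=
      Finset.sum_sq_le_sq_sum_of_nonneg (fun i _ => abs_nonneg _)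
  calc enorm2 v ≤ Real.sqrt ((∑ i, |v i|) ^ 2) := Real.sqrt_le_sqrt h
  _ = l1norm v := Real.sqrt_sq (by positivity)

lemma VI {N : ℕ} (K : Matrix (Fin N) (Fin N) ℝ) (hsym : Kᵀ = K)
    (hpsd : ∀ w, 0 ≤ w ⬝ᵥ K.mulVec w) (β : Fin N → ℝ) (k : ℝ)
    (w0 : Fin N → ℝ) (hw0 : l1norm w0 ≤ k)
    (hopt : ∀ v : Fin N → ℝ, l1norm v ≤ k →
      (1 / 2) * (w0 ⬝ᵥ K.mulVec w0) - β ⬝ᵥ w0 ≤ (1 / 2) * (v ⬝ᵥ K.mulVec v) - β ⬝ᵥ v)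
    (u : Fin N → ℝ) (hu : l1norm u ≤ k) :
    0 ≤ (K.mulVec w0 - β) ⬝ᵥ (u - w0) := by
  set D : Fin N → ℝ := u - w0 with hD
  set Q : ℝ := D ⬝ᵥ K.mulVec D with hQ
  have hQ0 : 0 ≤ Q := hpsd D
  have hcross : w0 ⬝ᵥ K.mulVec D = D ⬝ᵥ K.mulVec w0 := by
    rw [dot_mulVec_eq, hsym, dotProduct_comm]
  -- feasibility of w0 + t • D for t ∈ [0,1]
  have hfeas : ∀ t : ℝ, 0 ≤ t → t ≤ 1 → l1norm (w0 + t • D) ≤ k := by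
    intro t ht0 ht1
    have : ∀ i, |(w0 + t • D) i| ≤ (1 - t) * |w0 i| + t * |u i| := by
      intro i
      have : (w0 + t • D) i = (1 - t) * w0 i + t * u i := by
        simp [hD, Pi.add_apply, Pi.smul_apply, Pi.sub_apply]; ring
      rw [this]
      calc |(1 - t) * w0 i + t * u i| ≤ |(1 - t) * w0 i| + |t * u i| := abs_add_le _ _
        _ = (1 - t) * |w0 i| + t * |u i| := by
            rw [abs_mul, abs_mul, abs_of_nonneg (by linarith), abs_of_nonneg ht0]
    calc l1norm (w0 + t • D) ≤ ∑ i, ((1 - t) * |w0 i| + t * |u i|) :=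
          Finset.sum_le_sum (fun i _ => this i)
      _ = (1 - t) * l1norm w0 + t * l1norm u := by
          rw [Finset.sum_add_distrib, ← Finset.mul_sum, ← Finset.mul_sum]; rfl
      _ ≤ (1 - t) * k + t * k := by
          have h1 : (1 - t) * l1norm w0 ≤ (1 - t) * k :=
            mul_le_mul_of_nonneg_left hw0 (by linarith)
          have h2 : t * l1norm u ≤ t * k := mul_le_mul_of_nonneg_left hu ht0
          linarith
      _ = k := by ring
  -- step inequality
  have step : ∀ t : ℝ, 0 ≤ t → t ≤ 1 →
      0 ≤ t * ((K.mulVec w0 - β) ⬝ᵥ D) + t ^ 2 / 2 * Q := by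
    intro t ht0 ht1
    have h := hopt (w0 + t • D) (hfeas t ht0 ht1)
    have hexp : (w0 + t • D) ⬝ᵥ K.mulVec (w0 + t • D) =
        w0 ⬝ᵥ K.mulVec w0 + 2 * t * (D ⬝ᵥ K.mulVec w0) + t ^ 2 * Q := by
      rw [mulVec_add, mulVec_smul]
      simp only [dotProduct_add, add_dotProduct, dotProduct_smul, smul_dotProduct,
        smul_eq_mul]
      rw [hQ]
      nlinarith [hcross]
    have hβ : β ⬝ᵥ (w0 + t • D) = β ⬝ᵥ w0 + t * (β ⬝ᵥ D) := by
      simp [dotProduct_add, dotProduct_smul]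
    have hg : (K.mulVec w0 - β) ⬝ᵥ D = D ⬝ᵥ K.mulVec w0 - β ⬝ᵥ D := by
      rw [sub_dotProduct, dotProduct_comm]
    rw [hexp, hβ] at h
    rw [hg]
    nlinarith
  by_contra hcon
  push_neg at hcon
  set c : ℝ := -((K.mulVec w0 - β) ⬝ᵥ D) with hc
  have hcpos : 0 < c := by rw [hc]; linarith
  rcases eq_or_lt_of_le hQ0 with hQz | hQp
  · have := step 1 zero_le_one le_rfl
    rw [← hQz] at this
    nlinarith
  · set t : ℝ := min 1 (c / Q) with ht
    have ht0 : 0 < t := lt_min one_pos (div_pos hcpos hQp)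
    have ht1 : t ≤ 1 := min_le_left _ _
    have htQ : t * Q ≤ c := by
      have h2 : t ≤ c / Q := min_le_right _ _
      calc t * Q ≤ (c / Q) * Q := mul_le_mul_of_nonneg_right h2 hQ0
        _ = c := div_mul_cancel₀ c (ne_of_gt hQp)
    have := step t ht0.le ht1
    nlinarith

/-- High-probability stability bound (deterministic core):
‖ŵ − w*‖₂ ≤ (ε/μ)(2k√N·C + kε + C). -/
theorem stmt6 (N d : ℕ) (μ C k ε : ℝ) (hμ : 0 < μ) (hC : 0 < C) (hk : 0 ≤ k)
    (G Ghat : Matrix (Fin N) (Fin d) ℝ) (gtar : Fin d → ℝ)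
    (hmin : ∀ w : Fin N → ℝ, μ * (enorm2 w) ^ 2 ≤ w ⬝ᵥ (G * Gᵀ).mulVec w)
    (hΔ : specNorm (Ghat - G) ≤ ε)
    (hG : specNorm G ≤ Real.sqrt N * C)
    (hgtar : enorm2 gtar ≤ C)
    (wstar what : Fin N → ℝ)
    (hwstar : l1norm wstar ≤ k) (hwhat : l1norm what ≤ k)
    (hopt : ∀ v : Fin N → ℝ, l1norm v ≤ k →
      (1 / 2) * (wstar ⬝ᵥ (G * Gᵀ).mulVec wstar) - (G.mulVec gtar) ⬝ᵥ wstar ≤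
        (1 / 2) * (v ⬝ᵥ (G * Gᵀ).mulVec v) - (G.mulVec gtar) ⬝ᵥ v)
    (hopthat : ∀ v : Fin N → ℝ, l1norm v ≤ k →
      (1 / 2) * (what ⬝ᵥ (Ghat * Ghatᵀ).mulVec what) - (Ghat.mulVec gtar) ⬝ᵥ what ≤
        (1 / 2) * (v ⬝ᵥ (Ghat * Ghatᵀ).mulVec v) - (Ghat.mulVec gtar) ⬝ᵥ v) :
    enorm2 (what - wstar) ≤
      (ε / μ) * (2 * k * Real.sqrt N * C + k * ε + C) := by
  have hsym : (G * Gᵀ)ᵀ = G * Gᵀ := by rw [transpose_mul, transpose_transpose]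
  have hsymhat : (Ghat * Ghatᵀ)ᵀ = Ghat * Ghatᵀ := by
    rw [transpose_mul, transpose_transpose]
  have hpsd : ∀ (A : Matrix (Fin N) (Fin d) ℝ) (w : Fin N → ℝ),
      0 ≤ w ⬝ᵥ (A * Aᵀ).mulVec w := by
    intro A w
    rw [← mulVec_mulVec, dot_mulVec_eq, ← enorm_sq]
    exact sq_nonneg _
  have hVI1 : 0 ≤ ((G * Gᵀ).mulVec wstar - G.mulVec gtar) ⬝ᵥ (what - wstar) :=
    VI (G * Gᵀ) hsym (hpsd G) (G.mulVec gtar) k wstar hwstar hopt what hwhat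
  have hVI2 : 0 ≤ ((Ghat * Ghatᵀ).mulVec what - Ghat.mulVec gtar) ⬝ᵥ (wstar - what) :=
    VI (Ghat * Ghatᵀ) hsymhat (hpsd Ghat) (Ghat.mulVec gtar) k what hwhat hopthat
      wstar hwstar
  -- key symmetric identity
  have hs1 : wstar ⬝ᵥ ((G * Gᵀ).mulVec what) = what ⬝ᵥ ((G * Gᵀ).mulVec wstar) := by
    rw [dot_mulVec_eq, hsym, dotProduct_comm]
  -- key inequality
  have key : μ * enorm2 (what - wstar) ^ 2 ≤
      (what - wstar) ⬝ᵥ ((G * Gᵀ).mulVec what - (Ghat * Ghatᵀ).mulVec what) +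
        (Ghat.mulVec gtar - G.mulVec gtar) ⬝ᵥ (what - wstar) := by
    have h1 := hmin (what - wstar)
    simp only [mulVec_sub, dotProduct_sub, sub_dotProduct] at h1 hVI1 hVI2 ⊢
    have hc1 : ((G * Gᵀ).mulVec wstar) ⬝ᵥ what = what ⬝ᵥ ((G * Gᵀ).mulVec wstar) :=
      dotProduct_comm _ _
    have hc2 : ((G * Gᵀ).mulVec wstar) ⬝ᵥ wstar = wstar ⬝ᵥ ((G * Gᵀ).mulVec wstar) :=
      dotProduct_comm _ _
    have hc3 : ((Ghat * Ghatᵀ).mulVec what) ⬝ᵥ wstar =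
        wstar ⬝ᵥ ((Ghat * Ghatᵀ).mulVec what) := dotProduct_comm _ _
    have hc4 : ((Ghat * Ghatᵀ).mulVec what) ⬝ᵥ what =
        what ⬝ᵥ ((Ghat * Ghatᵀ).mulVec what) := dotProduct_comm _ _
    have hc5 : (G.mulVec gtar) ⬝ᵥ what = what ⬝ᵥ (G.mulVec gtar) := dotProduct_comm _ _
    have hc6 : (G.mulVec gtar) ⬝ᵥ wstar = wstar ⬝ᵥ (G.mulVec gtar) := dotProduct_comm _ _
    have hc7 : (Ghat.mulVec gtar) ⬝ᵥ what = what ⬝ᵥ (Ghat.mulVec gtar) :=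
      dotProduct_comm _ _
    have hc8 : (Ghat.mulVec gtar) ⬝ᵥ wstar = wstar ⬝ᵥ (Ghat.mulVec gtar) :=
      dotProduct_comm _ _
    linarith [hs1]
  -- decomposition of the perturbation
  have hdecomp : (G * Gᵀ).mulVec what - (Ghat * Ghatᵀ).mulVec what =
      -(G.mulVec ((Ghat - G)ᵀ.mulVec what)) -
        (Ghat - G).mulVec (Ghatᵀ.mulVec what) := by
    simp only [← mulVec_mulVec, transpose_sub, sub_mulVec, mulVec_sub]
    abel
  -- norm bounds
  have hε0 : 0 ≤ ε := (specNorm_nonneg _).trans hΔ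
  have hNC : 0 ≤ Real.sqrt N * C := (specNorm_nonneg G).trans hG
  have hwhatn : enorm2 what ≤ k := (enorm_le_l1norm _).trans hwhat
  have hΔt : specNorm (Ghat - G)ᵀ ≤ ε := (specNorm_transpose_le _).trans hΔ
  have hGhatT : specNorm Ghatᵀ ≤ Real.sqrt N * C + ε := by
    have h1 : specNorm Ghat ≤ Real.sqrt N * C + ε := by
      have h2 : Ghat = G + (Ghat - G) := by abel
      rw [h2]
      exact (specNorm_add_le _ _).trans (add_le_add hG hΔ)
    exact (specNorm_transpose_le _).trans h1
  have e1 : enorm2 ((Ghat - G)ᵀ.mulVec what) ≤ ε * k :=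
    (mulVec_enorm_le _ _).trans (mul_le_mul hΔt hwhatn (enorm_nonneg _) hε0)
  have e2 : enorm2 (G.mulVec ((Ghat - G)ᵀ.mulVec what)) ≤ Real.sqrt N * C * (ε * k) :=
    (mulVec_enorm_le _ _).trans (mul_le_mul hG e1 (enorm_nonneg _) hNC)
  have e3 : enorm2 (Ghatᵀ.mulVec what) ≤ (Real.sqrt N * C + ε) * k :=
    (mulVec_enorm_le _ _).trans
      (mul_le_mul hGhatT hwhatn (enorm_nonneg _) (by linarith))
  have e4 : enorm2 ((Ghat - G).mulVec (Ghatᵀ.mulVec what)) ≤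
      ε * ((Real.sqrt N * C + ε) * k) :=
    (mulVec_enorm_le _ _).trans (mul_le_mul hΔ e3 (enorm_nonneg _) hε0)
  have e5 : enorm2 ((Ghat - G).mulVec gtar) ≤ ε * C :=
    (mulVec_enorm_le _ _).trans (mul_le_mul hΔ hgtar (enorm_nonneg _) hε0)
  have t1 : |(what - wstar) ⬝ᵥ G.mulVec ((Ghat - G)ᵀ.mulVec what)| ≤
      enorm2 (what - wstar) * (Real.sqrt N * C * (ε * k)) :=
    (dot_abs_le _ _).trans (mul_le_mul_of_nonneg_left e2 (enorm_nonneg _))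
  have t2 : |(what - wstar) ⬝ᵥ (Ghat - G).mulVec (Ghatᵀ.mulVec what)| ≤
      enorm2 (what - wstar) * (ε * ((Real.sqrt N * C + ε) * k)) :=
    (dot_abs_le _ _).trans (mul_le_mul_of_nonneg_left e4 (enorm_nonneg _))
  have t3 : |(what - wstar) ⬝ᵥ (Ghat - G).mulVec gtar| ≤
      enorm2 (what - wstar) * (ε * C) :=
    (dot_abs_le _ _).trans (mul_le_mul_of_nonneg_left e5 (enorm_nonneg _))
  have hβ : (Ghat.mulVec gtar - G.mulVec gtar) ⬝ᵥ (what - wstar) =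
      (what - wstar) ⬝ᵥ (Ghat - G).mulVec gtar := by
    rw [sub_mulVec, dotProduct_comm]
  have key2 : μ * enorm2 (what - wstar) ^ 2 ≤
      enorm2 (what - wstar) * (ε * (2 * k * Real.sqrt N * C + k * ε + C)) := by
    rw [hdecomp, hβ] at key
    simp only [dotProduct_sub, dotProduct_neg] at key
    have hring : enorm2 (what - wstar) * (Real.sqrt N * C * (ε * k)) +
        enorm2 (what - wstar) * (ε * ((Real.sqrt N * C + ε) * k)) +
        enorm2 (what - wstar) * (ε * C) =
        enorm2 (what - wstar) * (ε * (2 * k * Real.sqrt N * C + k * ε + C)) := by ring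
    linarith [neg_abs_le ((what - wstar) ⬝ᵥ G.mulVec ((Ghat - G)ᵀ.mulVec what)),
      neg_abs_le ((what - wstar) ⬝ᵥ (Ghat - G).mulVec (Ghatᵀ.mulVec what)),
      le_abs_self ((what - wstar) ⬝ᵥ (Ghat - G).mulVec gtar), t1, t2, t3]
  have heD0 : 0 ≤ enorm2 (what - wstar) := enorm_nonneg _
  have hR : 0 ≤ 2 * k * Real.sqrt N * C + k * ε + C := by
    nlinarith [mul_nonneg hk hε0, mul_nonneg hk hNC]
  rcases eq_or_lt_of_le heD0 with h0 | hpos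
  · rw [← h0]
    exact mul_nonneg (div_nonneg hε0 hμ.le) hR
  · have hstep : μ * enorm2 (what - wstar) ≤
        ε * (2 * k * Real.sqrt N * C + k * ε + C) := by nlinarith
    rw [div_mul_eq_mul_div, le_div_iff₀ hμ]
    linarith
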